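/- Let ρ_1, ρ_2 ∈ (0,1) with ρ_1 + ρ_2 = 1 and let ψ_3(σ) := σ³ − 1 − 3(σ − 1). Then for all u_1, u_2 ∈ [0,1] with u_1 + u_2 = 1: Σ_{j=1}^2 ψ_3''(u_j/ρ_j) (1/ρ_j) (ρ_j − u_j)² ≥ 2 min{ρ_1, ρ_2} · Σ_{j=1}^2 ψ_3'(u_j/ρ_j) (u_j − ρ_j). That is, the cubic entropy generator ψ_3 satisfies the admissibility condition with constant μ/(2λ) = 2 min{ρ_1, ρ_2}. -/
import Mathlib


open Real Set

/-- the cubic entropy generator `ψ₃(σ) = σ³ - 1 - 3(σ-1)`, with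
`ψ₃'(σ) = 3(σ²-1)` and `ψ₃''(σ) = 6σ`, satisfies the `n = 2` admissibility
condition with constant `μ/(2λ) = 2 min{ρ₁, ρ₂}`. -/
theorem stmt_8
    (ρ₁ ρ₂ : ℝ) (hρ₁ : ρ₁ ∈ Set.Ioo (0:ℝ) 1) (hρ₂ : ρ₂ ∈ Set.Ioo (0:ℝ) 1)
    (hρsum : ρ₁ + ρ₂ = 1) :
    ∀ u₁ u₂ : ℝ, u₁ ∈ Set.Icc (0:ℝ) 1 → u₂ ∈ Set.Icc (0:ℝ) 1 → u₁ + u₂ = 1 →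
      2 * min ρ₁ ρ₂ *
          ((3 * ((u₁ / ρ₁) ^ 2 - 1)) * (u₁ - ρ₁) + (3 * ((u₂ / ρ₂) ^ 2 - 1)) * (u₂ - ρ₂)) ≤
        (6 * (u₁ / ρ₁)) * (1 / ρ₁) * (ρ₁ - u₁) ^ 2 +
          (6 * (u₂ / ρ₂)) * (1 / ρ₂) * (ρ₂ - u₂) ^ 2 := by
  obtain ⟨h1, h2⟩ := hρ₁
  obtain ⟨h3, h4⟩ := hρ₂
  intro u₁ u₂ hu₁ hu₂ husum
  obtain ⟨hu1, hu2⟩ := hu₁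
  obtain ⟨hu3, hu4⟩ := hu₂
  have hρ1 : ρ₁ ≠ 0 := ne_of_gt h1
  have hρ2 : ρ₂ ≠ 0 := ne_of_gt h3
  have hρeq : ρ₂ = 1 - ρ₁ := by linarith
  have hueq : u₂ = 1 - u₁ := by linarith
  subst hρeq hueq
  rcases le_total ρ₁ (1 - ρ₁) with hmin | hmin
  · rw [min_eq_left hmin, ← sub_nonneg]
    have key : (6 * (u₁ / ρ₁)) * (1 / ρ₁) * (ρ₁ - u₁) ^ 2 +
          (6 * ((1 - u₁) / (1 - ρ₁))) * (1 / (1 - ρ₁)) * ((1 - ρ₁) - (1 - u₁)) ^ 2 -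
        2 * ρ₁ *
          ((3 * ((u₁ / ρ₁) ^ 2 - 1)) * (u₁ - ρ₁) +
            (3 * (((1 - u₁) / (1 - ρ₁)) ^ 2 - 1)) * ((1 - u₁) - (1 - ρ₁)))
        = 6 * (u₁ - ρ₁)^2 * (u₁ * (1 - ρ₁) * ((1 - ρ₁) - ρ₁)) / (ρ₁^2 * (1 - ρ₁)^2) := by
      field_simp
      ring
    rw [key]
    have h5 : 0 ≤ u₁ * (1 - ρ₁) * ((1 - ρ₁) - ρ₁) := by
      apply mul_nonneg (by nlinarith) (by linarith)
    positivity
  · rw [min_eq_right hmin, ← sub_nonneg]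
    have key : (6 * (u₁ / ρ₁)) * (1 / ρ₁) * (ρ₁ - u₁) ^ 2 +
          (6 * ((1 - u₁) / (1 - ρ₁))) * (1 / (1 - ρ₁)) * ((1 - ρ₁) - (1 - u₁)) ^ 2 -
        2 * (1 - ρ₁) *
          ((3 * ((u₁ / ρ₁) ^ 2 - 1)) * (u₁ - ρ₁) +
            (3 * (((1 - u₁) / (1 - ρ₁)) ^ 2 - 1)) * ((1 - u₁) - (1 - ρ₁)))
        = 6 * (u₁ - ρ₁)^2 * ((1 - u₁) * ρ₁ * (ρ₁ - (1 - ρ₁))) / (ρ₁^2 * (1 - ρ₁)^2) := by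
      field_simp
      ring
    rw [key]
    have h5 : 0 ≤ (1 - u₁) * ρ₁ * (ρ₁ - (1 - ρ₁)) := by
      apply mul_nonneg (by nlinarith) (by linarith)
    positivity
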